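/- Every uniformly discrete metric space X with bounded geometry admits an atlas: for every R > 0 there exist a finite collection T_R of pairwise disjoint partial translations of X whose union contains the set {(x,y) ∈ X×X : d(x,y) < R}, and a collection Σ_R of partial cotranslations for T_R, such that there exists k ∈ ℕ with the property that for each pair x, x' ∈ X at most k elements σ ∈ Σ_R satisfy σx = x', and such that for every t ∈ T_R and all (x,y), (x',y') ∈ t there exists σ ∈ Σ_R with σx = x' and σy = y'. -/
import Mathlib


open Metric

def UniformlyDiscrete (X : Type*) [MetricSpace X] : Prop :=
  ∃ δ > (0:ℝ), ∀ x y : X, x ≠ y → δ ≤ dist x y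

def BoundedGeometry (X : Type*) [MetricSpace X] : Prop :=
  ∀ R > (0:ℝ), ∃ N : ℕ, ∀ x : X,
    (closedBall x R).Finite ∧ (closedBall x R).ncard ≤ N

/-- A partial bijection of `X`: a subset of `X × X` both of whose coordinate
projections are injective. -/
def IsPartialBijection {X : Type*} (t : Set (X × X)) : Prop :=
  ∀ p ∈ t, ∀ q ∈ t, (p.1 = q.1 → p = q) ∧ (p.2 = q.2 → p = q)

/-- A partial translation of `X`: a partial bijection moving points a uniformly
bounded distance. -/
def IsPartialTranslation {X : Type*} [MetricSpace X] (t : Set (X × X)) : Prop :=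
  IsPartialBijection t ∧ ∃ B : ℝ, ∀ p ∈ t, dist p.1 p.2 ≤ B

/-- `σ` is a partial cotranslation for the family `T` of partial translations:
`σ` is a partial bijection, and whenever `(x,y) ∈ t ∈ T` and `σ` is defined at
both `x` and `y`, then `(σ x, σ y) ∈ t`.  Here `(x, x') ∈ σ` means `σ x = x'`. -/
def IsPartialCotranslationFor {X : Type*} [MetricSpace X]
    (T : Set (Set (X × X))) (σ : Set (X × X)) : Prop :=
  IsPartialBijection σ ∧
    ∀ t ∈ T, ∀ x y x' y' : X, (x, y) ∈ t → (x, x') ∈ σ → (y, y') ∈ σ → (x', y') ∈ t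

/-- `(T, Sig)` is an atlas chart at scale `R` with multiplicity bound `k`:
`T` is a finite set of pairwise disjoint partial translations whose union
contains the `R`-neighbourhood of the diagonal, `Sig` is a set of partial
cotranslations for `T`, at most `k` elements of `Sig` send `x` to `x'` for any
`x, x'`, and the elements of `Sig` act transitively on each `t ∈ T`. -/
def IsAtlasAt {X : Type*} [MetricSpace X] (R : ℝ) (k : ℕ)
    (T : Set (Set (X × X))) (Sig : Set (Set (X × X))) : Prop :=
  T.Finite ∧
  (∀ t ∈ T, IsPartialTranslation t) ∧
  T.Pairwise Disjoint ∧
  (∀ x y : X, dist x y < R → ∃ t ∈ T, (x, y) ∈ t) ∧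
  (∀ σ ∈ Sig, IsPartialCotranslationFor T σ) ∧
  (∀ x x' : X, {σ ∈ Sig | (x, x') ∈ σ}.Finite ∧ {σ ∈ Sig | (x, x') ∈ σ}.ncard ≤ k) ∧
  (∀ t ∈ T, ∀ x y x' y' : X, (x, y) ∈ t → (x', y') ∈ t →
    ∃ σ ∈ Sig, (x, x') ∈ σ ∧ (y, y') ∈ σ)

/-- The cotranslation orbit of the pair `(x, y)` under `Sig`. -/
def cotranslationOrbit {X : Type*} (Sig : Set (Set (X × X))) (x y : X) :
    Set (X × X) :=
  {p : X × X | ∃ σ ∈ Sig, (x, p.1) ∈ σ ∧ (y, p.2) ∈ σ}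

/-- An atlas chart is globally controlled if every cotranslation orbit is a
partial translation. -/
def IsGloballyControlledAt {X : Type*} [MetricSpace X]
    (Sig : Set (Set (X × X))) : Prop :=
  ∀ x y : X, IsPartialTranslation (cotranslationOrbit Sig x y)

theorem stmt9 (X : Type) [MetricSpace X]
    (hud : UniformlyDiscrete X) (hbg : BoundedGeometry X) :
    ∀ R > (0:ℝ), ∃ (k : ℕ) (T Sig : Set (Set (X × X))), IsAtlasAt R k T Sig := by
  classical
  intro R hR
  obtain ⟨N, hN⟩ := hbg R hR
  -- choose an injective enumeration of each closed ball
  have hf : ∀ x : X, ∃ f : X → ℕ,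
      Set.InjOn f (closedBall x R) ∧ ∀ y ∈ closedBall x R, f y < N := by
    intro x
    obtain ⟨hfin, hcard⟩ := hN x
    haveI : Fintype (closedBall x R) := hfin.fintype
    have hcard' : Fintype.card (closedBall x R) ≤ N := by
      rwa [Set.ncard_eq_toFinset_card', Set.toFinset_card] at hcard
    let e := Fintype.equivFin (closedBall x R)
    refine ⟨fun y => if h : y ∈ closedBall x R then (e ⟨y, h⟩ : ℕ) else 0, ?_, ?_⟩
    · intro a ha b hb hab
      simp only [dif_pos ha, dif_pos hb] at hab
      have : e ⟨a, ha⟩ = e ⟨b, hb⟩ := Fin.val_injective hab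
      exact congrArg Subtype.val (e.injective this)
    · intro y hy
      simp only [dif_pos hy]
      exact lt_of_lt_of_le (e ⟨y, hy⟩).isLt hcard'
  choose f hfinj hflt using hf
  set Δ : Set (X × X) := {p | p.1 = p.2} with hΔdef
  set t : ℕ × ℕ → Set (X × X) := fun ij =>
    {p | p.1 ≠ p.2 ∧ dist p.1 p.2 < R ∧ f p.1 p.2 = ij.1 ∧ f p.2 p.1 = ij.2} with htdef
  set T : Set (Set (X × X)) := insert Δ (t '' (Set.Iio N ×ˢ Set.Iio N)) with hTdef
  -- basic facts about T
  have hΔT : Δ ∈ T := Set.mem_insert _ _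
  have hTfin : T.Finite :=
    (((Set.finite_Iio N).prod (Set.finite_Iio N)).image t).insert Δ
  have hdiagmem : ∀ s ∈ T, ∀ a : X, (a, a) ∈ s → s = Δ := by
    rintro s hs a ha
    rcases hs with rfl | ⟨ij, _, rfl⟩
    · rfl
    · exact absurd rfl ha.1
  have huniq : ∀ s ∈ T, ∀ s' ∈ T, ∀ p : X × X, p ∈ s → p ∈ s' → s = s' := by
    rintro s hs s' hs' p hp hp'
    rcases hs with rfl | ⟨ij, _, rfl⟩
    · rcases hs' with rfl | ⟨ij', _, rfl⟩
      · rfl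
      · exact absurd hp hp'.1
    · rcases hs' with rfl | ⟨ij', _, rfl⟩
      · exact absurd hp' hp.1
      · obtain ⟨-, -, h1, h2⟩ := hp
        obtain ⟨-, -, h1', h2'⟩ := hp'
        have hij : ij = ij' := Prod.ext (h1.symm.trans h1') (h2.symm.trans h2')
        rw [hij]
  have htransp : ∀ s ∈ T, ∃ s' ∈ T, ∀ a b : X, (a, b) ∈ s' ↔ (b, a) ∈ s := by
    rintro s hs
    rcases hs with rfl | ⟨ij, hij, rfl⟩
    · exact ⟨Δ, hΔT, fun a b => ⟨fun h => h.symm, fun h => h.symm⟩⟩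
    · refine ⟨t (ij.2, ij.1), Set.mem_insert_of_mem _ ⟨(ij.2, ij.1), ⟨hij.2, hij.1⟩, rfl⟩, ?_⟩
      intro a b
      constructor
      · rintro ⟨h1, h2, h3, h4⟩
        exact ⟨Ne.symm h1, by rwa [dist_comm], h4, h3⟩
      · rintro ⟨h1, h2, h3, h4⟩
        exact ⟨Ne.symm h1, by rwa [dist_comm], h4, h3⟩
  have hball : ∀ a b : X, dist a b < R → b ∈ closedBall a R := by
    intro a b h
    exact mem_closedBall.mpr (by rw [dist_comm]; exact h.le)
  have hpb : ∀ s ∈ T, IsPartialBijection s := by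
    rintro s hs
    rcases hs with rfl | ⟨ij, _, rfl⟩
    · rintro ⟨p1, p2⟩ hp ⟨q1, q2⟩ hq
      simp only [hΔdef, Set.mem_setOf_eq] at hp hq
      subst hp; subst hq
      exact ⟨fun h => congrArg (fun z => (z, z)) h, fun h => congrArg (fun z => (z, z)) h⟩
    · rintro ⟨p1, p2⟩ hp ⟨q1, q2⟩ hq
      obtain ⟨hpne, hpd, hp1, hp2⟩ := hp
      obtain ⟨hqne, hqd, hq1, hq2⟩ := hq
      constructor
      · rintro (h : p1 = q1)
        subst h
        have : p2 = q2 :=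
          hfinj p1 (hball _ _ hpd) (hball _ _ hqd) (hp1.trans hq1.symm)
        rw [this]
      · rintro (h : p2 = q2)
        subst h
        have : p1 = q1 :=
          hfinj p2 (hball _ _ (by rwa [dist_comm])) (hball _ _ (by rwa [dist_comm]))
            (hp2.trans hq2.symm)
        rw [this]
  set Sig : Set (Set (X × X)) :=
    {σ | ∃ s ∈ T, ∃ p ∈ s, ∃ q ∈ s, σ = ({(p.1, q.1), (p.2, q.2)} : Set (X × X))}
    with hSigdef
  refine ⟨(T ×ˢ (Set.univ : Set Bool)).ncard, T, Sig, hTfin, ?_, ?_, ?_, ?_, ?_, ?_⟩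
  · -- partial translations
    rintro s hs
    refine ⟨hpb s hs, ?_⟩
    rcases hs with rfl | ⟨ij, _, rfl⟩
    · exact ⟨0, fun p hp => by
        have : p.1 = p.2 := hp
        rw [this, dist_self]⟩
    · exact ⟨R, fun p hp => hp.2.1.le⟩
  · -- pairwise disjoint
    intro s hs s' hs' hne
    rw [Set.disjoint_left]
    intro p hp hp'
    exact hne (huniq s hs s' hs' p hp hp')
  · -- cover
    intro x y hxy
    by_cases hxyeq : x = y
    · exact ⟨Δ, hΔT, hxyeq⟩
    · refine ⟨t (f x y, f y x), Set.mem_insert_of_mem _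
        ⟨(f x y, f y x), ⟨hflt x y (hball _ _ hxy), hflt y x (hball _ _ (by rwa [dist_comm]))⟩,
          rfl⟩, hxyeq, hxy, rfl, rfl⟩
  · -- cotranslations
    rintro σ ⟨s, hs, ⟨a, b⟩, hp, ⟨a', b'⟩, hq, rfl⟩
    have hd1 : a = b → a' = b' := by
      intro h
      subst h
      have := hdiagmem s hs a hp
      rw [this] at hq
      exact hq
    have hd2 : a' = b' → a = b := by
      intro h
      subst h
      have := hdiagmem s hs a' hq
      rw [this] at hp
      exact hp
    constructor
    · -- partial bijection
      intro u hu v hv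
      simp only [Set.mem_insert_iff, Set.mem_singleton_iff] at hu hv
      rcases hu with rfl | rfl <;> rcases hv with rfl | rfl
      · exact ⟨fun _ => rfl, fun _ => rfl⟩
      · exact ⟨fun h => by have h1 : a = b := h; rw [h1, hd1 h1],
          fun h => by have h1 : a' = b' := h; rw [h1, hd2 h1]⟩
      · exact ⟨fun h => by have h1 : a = b := Eq.symm h; rw [h1, hd1 h1],
          fun h => by have h1 : a' = b' := Eq.symm h; rw [h1, hd2 h1]⟩
      · exact ⟨fun _ => rfl, fun _ => rfl⟩
    · intro t' ht' u v u' v' huv hu hv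
      simp only [Set.mem_insert_iff, Set.mem_singleton_iff, Prod.mk.injEq] at hu hv
      rcases hu with ⟨hu1, hu2⟩ | ⟨hu1, hu2⟩ <;> rcases hv with ⟨hv1, hv2⟩ | ⟨hv1, hv2⟩
      · rw [hu1, hv1] at huv
        rw [hu2, hv2, hdiagmem t' ht' a huv]; rfl
      · rw [hu1, hv1] at huv
        rw [hu2, hv2, huniq t' ht' s hs (a, b) huv hp]; exact hq
      · rw [hu1, hv1] at huv
        obtain ⟨s', hs', hiff⟩ := htransp s hs
        have hm : (b, a) ∈ s' := (hiff b a).mpr hp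
        rw [hu2, hv2, huniq t' ht' s' hs' (b, a) huv hm]
        exact (hiff b' a').mpr hq
      · rw [hu1, hv1] at huv
        rw [hu2, hv2, hdiagmem t' ht' b huv]; rfl
  · -- multiplicity bound
    intro x x'
    set n1 : Set (X × X) → X → X := fun s a =>
      if h : ∃ c, (a, c) ∈ s then h.choose else x with hn1def
    set n2 : Set (X × X) → X → X := fun s a =>
      if h : ∃ c, (c, a) ∈ s then h.choose else x with hn2def
    set g : Set (X × X) × Bool → Set (X × X) := fun sb =>
      if sb.2 then ({(x, x'), (n1 sb.1 x, n1 sb.1 x')} : Set (X × X))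
      else ({(x, x'), (n2 sb.1 x, n2 sb.1 x')} : Set (X × X)) with hgdef
    have hn1 : ∀ s ∈ T, ∀ a c : X, (a, c) ∈ s → n1 s a = c := by
      intro s hs a c hc
      have hex : ∃ c, (a, c) ∈ s := ⟨c, hc⟩
      have h1 := hex.choose_spec
      have := ((hpb s hs) (a, hex.choose) h1 (a, c) hc).1 rfl
      simp only [hn1def, dif_pos hex]
      exact congrArg Prod.snd this
    have hn2 : ∀ s ∈ T, ∀ a c : X, (c, a) ∈ s → n2 s a = c := by
      intro s hs a c hc
      have hex : ∃ c, (c, a) ∈ s := ⟨c, hc⟩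
      have h1 := hex.choose_spec
      have := ((hpb s hs) (hex.choose, a) h1 (c, a) hc).2 rfl
      simp only [hn2def, dif_pos hex]
      exact congrArg Prod.fst this
    have hsub : {σ ∈ Sig | (x, x') ∈ σ} ⊆ g '' (T ×ˢ (Set.univ : Set Bool)) := by
      rintro σ ⟨⟨s, hs, ⟨a, b⟩, hp, ⟨a', b'⟩, hq, rfl⟩, hxmem⟩
      simp only [Set.mem_insert_iff, Set.mem_singleton_iff, Prod.mk.injEq] at hxmem
      rcases hxmem with ⟨rfl, rfl⟩ | ⟨rfl, rfl⟩
      · refine ⟨(s, true), ⟨hs, trivial⟩, ?_⟩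
        simp only [hgdef, if_pos]
        rw [hn1 s hs x b hp, hn1 s hs x' b' hq]
      · refine ⟨(s, false), ⟨hs, trivial⟩, ?_⟩
        simp only [hgdef, Bool.false_eq_true, if_false]
        rw [hn2 s hs x a hp, hn2 s hs x' a' hq]
        exact Set.pair_comm _ _
    have hbig : (T ×ˢ (Set.univ : Set Bool)).Finite := hTfin.prod (Set.finite_univ)
    refine ⟨(hbig.image g).subset hsub, ?_⟩
    calc {σ ∈ Sig | (x, x') ∈ σ}.ncard ≤ (g '' (T ×ˢ (Set.univ : Set Bool))).ncard :=
          Set.ncard_le_ncard hsub (hbig.image g)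
      _ ≤ (T ×ˢ (Set.univ : Set Bool)).ncard := Set.ncard_image_le hbig
  · -- transitivity
    intro s hs x y x' y' hxy hxy'
    exact ⟨{(x, x'), (y, y')}, ⟨s, hs, (x, y), hxy, (x', y'), hxy', rfl⟩,
      Set.mem_insert _ _, Set.mem_insert_of_mem _ rfl⟩
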